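/- Let G = (V,E) be a finite simple graph equipped with a linear order on V. Call a set W ⊆ V closed if W = Desc(W) and there are no 2-hops, 3-hops, 4-hops or lassos with respect to W, and call a closure of U ⊆ V any minimal closed set containing U (minimal with respect to set inclusion among closed supersets of U). Then every set U ⊆ V has exactly one closure. -/

import Mathlib

/-- `v` is a descendant of `u`: there is a decreasing path (with respect to the linear
order on the vertices) from `u` to `v`; every vertex is a descendant of itself. -/
def Descends {V : Type*} [LT V] (G : SimpleGraph V) (u v : V) : Prop :=
  ∃ l : List V, l ≠ [] ∧ l.Chain' G.Adj ∧ l.Chain' (· > ·) ∧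
    l.head? = some u ∧ l.getLast? = some v

/-- The set of descendants of a vertex set `U`. -/
def Desc {V : Type*} [LT V] (G : SimpleGraph V) (U : Set V) : Set V :=
  {v | ∃ u ∈ U, Descends G u v}

/-- A `τ`-hop with respect to `U` that is a simple path: a simple path of length `τ`
with both (distinct) endpoints in `U` and all internal vertices outside `U`. -/
def IsPathHop {V : Type*} (G : SimpleGraph V) (U : Set V) (τ : ℕ) : Prop :=
  ∃ f : Fin (τ + 1) → V, Function.Injective f ∧
    (∀ i : Fin τ, G.Adj (f i.castSucc) (f i.succ)) ∧
    f 0 ∈ U ∧ f (Fin.last τ) ∈ U ∧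
    ∀ i : Fin (τ + 1), i ≠ 0 → i ≠ Fin.last τ → f i ∉ U

/-- A `τ`-hop with respect to `U` that is a simple cycle: a simple cycle of length
`τ ≥ 3` whose (coinciding) endpoints lie in `U` and whose other vertices are
outside `U`. -/
def IsCycleHop {V : Type*} (G : SimpleGraph V) (U : Set V) (τ : ℕ) : Prop :=
  3 ≤ τ ∧ ∃ f : Fin (τ + 1) → V, f 0 = f (Fin.last τ) ∧
    (Function.Injective fun i : Fin τ => f i.castSucc) ∧
    (∀ i : Fin τ, G.Adj (f i.castSucc) (f i.succ)) ∧
    f 0 ∈ U ∧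
    ∀ i : Fin (τ + 1), i ≠ 0 → i ≠ Fin.last τ → f i ∉ U

/-- A `τ`-hop with respect to `U`: a simple path or simple cycle of length `τ` whose
endpoints are in `U` and whose other vertices are not in `U`. -/
def IsHop {V : Type*} (G : SimpleGraph V) (U : Set V) (τ : ℕ) : Prop :=
  IsPathHop G U τ ∨ IsCycleHop G U τ

/-- A lasso with respect to `U`: a walk `(v₁, v₂, v₃, v₄, v₅)` with `v₂ = v₅`, all
other vertices distinct, and only `v₁` in `U`. -/
def IsLasso {V : Type*} (G : SimpleGraph V) (U : Set V) : Prop :=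
  ∃ v₁ v₂ v₃ v₄ : V, [v₁, v₂, v₃, v₄].Nodup ∧
    v₁ ∈ U ∧ v₂ ∉ U ∧ v₃ ∉ U ∧ v₄ ∉ U ∧
    G.Adj v₁ v₂ ∧ G.Adj v₂ v₃ ∧ G.Adj v₃ v₄ ∧ G.Adj v₄ v₂

/-- `W` is closed: `W = Desc(W)` and there are no 2-, 3-, 4-hops or lassos with
respect to `W`. -/
def ClosedRT {V : Type*} [LT V] (G : SimpleGraph V) (W : Set V) : Prop :=
  W = Desc G W ∧ ¬ IsHop G W 2 ∧ ¬ IsHop G W 3 ∧ ¬ IsHop G W 4 ∧ ¬ IsLasso G W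

/-- `W` is a closure of `U`: a closed superset of `U` that is minimal with respect to
set inclusion among closed supersets of `U`. -/
def IsClosureRT {V : Type*} [LT V] (G : SimpleGraph V) (U W : Set V) : Prop :=
  ClosedRT G W ∧ U ⊆ W ∧ ∀ W', ClosedRT G W' → U ⊆ W' → W' ⊆ W → W' = W

section helpers
variable {V : Type*} [LinearOrder V] {G : SimpleGraph V} {U : Set V}

lemma descends_refl (v : V) : Descends G v v :=
  ⟨[v], by simp, List.isChain_singleton _, List.isChain_singleton _, by simp, by simp⟩

lemma mkHop2 {a b c : V} (hab : G.Adj a b) (hbc : G.Adj b c)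
    (hac : a ≠ c) (ha : a ∈ U) (hb : b ∉ U) (hc : c ∈ U) : IsHop G U 2 := by
  have h1 : a ≠ b := fun h => hb (h ▸ ha)
  have h2 : b ≠ c := G.ne_of_adj hbc
  refine Or.inl ⟨![a,b,c], ?_, ?_, ?_, ?_, ?_⟩
  · intro i j hij; fin_cases i <;> fin_cases j <;> simp_all
  · intro i; fin_cases i <;> simpa using ‹_›
  · simpa using ha
  · simpa using hc
  · intro i hi0 hil; fin_cases i <;> simp_all [Fin.ext_iff, Fin.last]

lemma mkHop3 {a b c d : V} (hab : G.Adj a b) (hbc : G.Adj b c) (hcd : G.Adj c d)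
    (hac : a ≠ c) (had : a ≠ d) (hbd : b ≠ d)
    (ha : a ∈ U) (hb : b ∉ U) (hc : c ∉ U) (hd : d ∈ U) : IsHop G U 3 := by
  have h1 : a ≠ b := fun h => hb (h ▸ ha)
  have h2 : b ≠ c := G.ne_of_adj hbc
  have h3 : c ≠ d := G.ne_of_adj hcd
  refine Or.inl ⟨![a,b,c,d], ?_, ?_, ?_, ?_, ?_⟩
  · intro i j hij; fin_cases i <;> fin_cases j <;> simp_all
  · intro i; fin_cases i <;> simpa using ‹_›
  · simpa using ha
  · simpa using hd
  · intro i hi0 hil; fin_cases i <;> simp_all [Fin.ext_iff, Fin.last]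

lemma mkHop4 {a b c d e : V} (hab : G.Adj a b) (hbc : G.Adj b c) (hcd : G.Adj c d)
    (hde : G.Adj d e)
    (hac : a ≠ c) (had : a ≠ d) (hae : a ≠ e) (hbd : b ≠ d) (hbe : b ≠ e) (hce : c ≠ e)
    (ha : a ∈ U) (hb : b ∉ U) (hc : c ∉ U) (hd : d ∉ U) (he : e ∈ U) : IsHop G U 4 := by
  have h1 : a ≠ b := fun h => hb (h ▸ ha)
  have h2 : b ≠ c := G.ne_of_adj hbc
  have h3 : c ≠ d := G.ne_of_adj hcd
  have h4 : d ≠ e := G.ne_of_adj hde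
  refine Or.inl ⟨![a,b,c,d,e], ?_, ?_, ?_, ?_, ?_⟩
  · intro i j hij; fin_cases i <;> fin_cases j <;> simp_all
  · intro i; fin_cases i <;> simpa using ‹_›
  · simpa using ha
  · simpa using he
  · intro i hi0 hil; fin_cases i <;> simp_all [Fin.ext_iff, Fin.last]

lemma mkCyc3 {a b c : V} (hab : G.Adj a b) (hbc : G.Adj b c) (hca : G.Adj c a)
    (ha : a ∈ U) (hb : b ∉ U) (hc : c ∉ U) : IsHop G U 3 := by
  have h1 : a ≠ b := G.ne_of_adj hab
  have h2 : b ≠ c := G.ne_of_adj hbc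
  have h3 : c ≠ a := G.ne_of_adj hca
  refine Or.inr ⟨by norm_num, ![a,b,c,a], rfl, ?_, ?_, by simpa using ha, ?_⟩
  · have e : (fun i : Fin 3 => (![a,b,c,a] : Fin 4 → V) i.castSucc) = ![a,b,c] := by
      funext i; fin_cases i <;> rfl
    rw [e]; intro i j hij; fin_cases i <;> fin_cases j <;> simp_all
  · intro i; fin_cases i
    · exact hab
    · exact hbc
    · exact hca
  · intro i hi0 hil; fin_cases i <;> simp_all [Fin.ext_iff, Fin.last]

lemma mkCyc4 {a b c d : V} (hab : G.Adj a b) (hbc : G.Adj b c) (hcd : G.Adj c d)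
    (hda : G.Adj d a) (hac : a ≠ c) (hbd : b ≠ d)
    (ha : a ∈ U) (hb : b ∉ U) (hc : c ∉ U) (hd : d ∉ U) : IsHop G U 4 := by
  have h1 : a ≠ b := G.ne_of_adj hab
  have h2 : b ≠ c := G.ne_of_adj hbc
  have h3 : c ≠ d := G.ne_of_adj hcd
  have h4 : d ≠ a := G.ne_of_adj hda
  refine Or.inr ⟨by norm_num, ![a,b,c,d,a], rfl, ?_, ?_, by simpa using ha, ?_⟩
  · have e : (fun i : Fin 4 => (![a,b,c,d,a] : Fin 5 → V) i.castSucc) = ![a,b,c,d] := by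
      funext i; fin_cases i <;> rfl
    rw [e]; intro i j hij; fin_cases i <;> fin_cases j <;> simp_all
  · intro i; fin_cases i
    · exact hab
    · exact hbc
    · exact hcd
    · exact hda
  · intro i hi0 hil; fin_cases i <;> simp_all [Fin.ext_iff, Fin.last]

lemma hop2_elim (h : IsHop G U 2) :
    ∃ a b c : V, G.Adj a b ∧ G.Adj b c ∧ a ≠ c ∧ a ∈ U ∧ b ∉ U ∧ c ∈ U := by
  rcases h with ⟨f, hinj, hadj, h0, hl, hnot⟩ | ⟨hτ, _⟩
  · exact ⟨f 0, f 1, f 2, hadj 0, hadj 1,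
      fun h => absurd (hinj h) (by decide), h0, hnot 1 (by decide) (by decide), hl⟩
  · omega

lemma hop3_elim (h : IsHop G U 3) :
    (∃ a b c d : V, G.Adj a b ∧ G.Adj b c ∧ G.Adj c d ∧
      a ≠ c ∧ a ≠ d ∧ b ≠ d ∧ a ∈ U ∧ b ∉ U ∧ c ∉ U ∧ d ∈ U) ∨
    (∃ a b c : V, G.Adj a b ∧ G.Adj b c ∧ G.Adj c a ∧ a ∈ U ∧ b ∉ U ∧ c ∉ U) := by
  rcases h with ⟨f, hinj, hadj, h0, hl, hnot⟩ | ⟨hτ, f, hcl, hinj, hadj, h0, hnot⟩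
  · exact Or.inl ⟨f 0, f 1, f 2, f 3, hadj 0, hadj 1, hadj 2,
      fun h => absurd (hinj h) (by decide), fun h => absurd (hinj h) (by decide),
      fun h => absurd (hinj h) (by decide),
      h0, hnot 1 (by decide) (by decide), hnot 2 (by decide) (by decide), hl⟩
  · refine Or.inr ⟨f 0, f 1, f 2, hadj 0, hadj 1, ?_, h0,
      hnot 1 (by decide) (by decide), hnot 2 (by decide) (by decide)⟩
    have h3 : G.Adj (f 2) (f (Fin.last 3)) := hadj 2
    rwa [← hcl] at h3

lemma hop4_elim (h : IsHop G U 4) :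
    (∃ a b c d e : V, G.Adj a b ∧ G.Adj b c ∧ G.Adj c d ∧ G.Adj d e ∧
      a ≠ c ∧ a ≠ d ∧ a ≠ e ∧ b ≠ d ∧ b ≠ e ∧ c ≠ e ∧
      a ∈ U ∧ b ∉ U ∧ c ∉ U ∧ d ∉ U ∧ e ∈ U) ∨
    (∃ a b c d : V, G.Adj a b ∧ G.Adj b c ∧ G.Adj c d ∧ G.Adj d a ∧
      a ≠ c ∧ b ≠ d ∧ a ∈ U ∧ b ∉ U ∧ c ∉ U ∧ d ∉ U) := by
  rcases h with ⟨f, hinj, hadj, h0, hl, hnot⟩ | ⟨hτ, f, hcl, hinj, hadj, h0, hnot⟩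
  · exact Or.inl ⟨f 0, f 1, f 2, f 3, f 4, hadj 0, hadj 1, hadj 2, hadj 3,
      fun h => absurd (hinj h) (by decide), fun h => absurd (hinj h) (by decide),
      fun h => absurd (hinj h) (by decide), fun h => absurd (hinj h) (by decide),
      fun h => absurd (hinj h) (by decide), fun h => absurd (hinj h) (by decide),
      h0, hnot 1 (by decide) (by decide), hnot 2 (by decide) (by decide),
      hnot 3 (by decide) (by decide), hl⟩
  · refine Or.inr ⟨f 0, f 1, f 2, f 3, hadj 0, hadj 1, hadj 2, ?_,
      fun h => absurd (hinj (a₁ := 0) (a₂ := 2) h) (by decide),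
      fun h => absurd (hinj (a₁ := 1) (a₂ := 3) h) (by decide),
      h0, hnot 1 (by decide) (by decide), hnot 2 (by decide) (by decide),
      hnot 3 (by decide) (by decide)⟩
    have h4 : G.Adj (f 3) (f (Fin.last 4)) := hadj 3
    rwa [← hcl] at h4

lemma subset_desc {W : Set V} : W ⊆ Desc G W := fun v hv => ⟨v, hv, descends_refl v⟩

lemma closed_inter {W₁ W₂ : Set V} (h1 : ClosedRT G W₁) (h2 : ClosedRT G W₂) :
    ClosedRT G (W₁ ∩ W₂) := by
  obtain ⟨hd1, h21, h31, h41, hl1⟩ := h1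
  obtain ⟨hd2, h22, h32, h42, hl2⟩ := h2
  refine ⟨?_, ?_, ?_, ?_, ?_⟩
  · apply subset_antisymm subset_desc
    rintro v ⟨u, ⟨hu1, hu2⟩, hdes⟩
    exact ⟨hd1 ▸ ⟨u, hu1, hdes⟩, hd2 ▸ ⟨u, hu2, hdes⟩⟩
  · intro h
    obtain ⟨a, b, c, hab, hbc, hac, ⟨ha1, ha2⟩, hb, ⟨hc1, hc2⟩⟩ := hop2_elim h
    rcases (show b ∉ W₁ ∨ b ∉ W₂ by tauto) with hb | hb
    · exact h21 (mkHop2 hab hbc hac ha1 hb hc1)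
    · exact h22 (mkHop2 hab hbc hac ha2 hb hc2)
  · intro h
    rcases hop3_elim h with
      ⟨a, b, c, d, hab, hbc, hcd, hac, had, hbd, ⟨ha1, ha2⟩, hb, hc, ⟨hd1, hd2⟩⟩ |
      ⟨a, b, c, hab, hbc, hca, ⟨ha1, ha2⟩, hb, hc⟩
    · by_cases hbW : b ∈ W₁ <;> by_cases hcW : c ∈ W₁
      · exact h32 (mkHop3 hab hbc hcd hac had hbd ha2 (fun h => hb ⟨hbW, h⟩)
          (fun h => hc ⟨hcW, h⟩) hd2)
      · exact h21 (mkHop2 hbc hcd hbd hbW hcW hd1)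
      · exact h21 (mkHop2 hab hbc hac ha1 hbW hcW)
      · exact h31 (mkHop3 hab hbc hcd hac had hbd ha1 hbW hcW hd1)
    · by_cases hbW : b ∈ W₁ <;> by_cases hcW : c ∈ W₁
      · exact h32 (mkCyc3 hab hbc hca ha2 (fun h => hb ⟨hbW, h⟩) (fun h => hc ⟨hcW, h⟩))
      · exact h21 (mkHop2 hbc hca (G.ne_of_adj hab).symm hbW hcW ha1)
      · exact h21 (mkHop2 hab hbc (G.ne_of_adj hca).symm ha1 hbW hcW)
      · exact h31 (mkCyc3 hab hbc hca ha1 hbW hcW)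
  · intro h
    rcases hop4_elim h with
      ⟨a, b, c, d, e, hab, hbc, hcd, hde, hac, had, hae, hbd, hbe, hce,
        ⟨ha1, ha2⟩, hb, hc, hd, ⟨he1, he2⟩⟩ |
      ⟨a, b, c, d, hab, hbc, hcd, hda, hac, hbd, ⟨ha1, ha2⟩, hb, hc, hd⟩
    · by_cases hbW : b ∈ W₁ <;> by_cases hcW : c ∈ W₁ <;> by_cases hdW : d ∈ W₁
      · exact h42 (mkHop4 hab hbc hcd hde hac had hae hbd hbe hce ha2
          (fun h => hb ⟨hbW, h⟩) (fun h => hc ⟨hcW, h⟩) (fun h => hd ⟨hdW, h⟩) he2)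
      · exact h21 (mkHop2 hcd hde hce hcW hdW he1)
      · exact h21 (mkHop2 hbc hcd hbd hbW hcW hdW)
      · exact h31 (mkHop3 hbc hcd hde hbd hbe hce hbW hcW hdW he1)
      · exact h21 (mkHop2 hab hbc hac ha1 hbW hcW)
      · exact h21 (mkHop2 hab hbc hac ha1 hbW hcW)
      · exact h31 (mkHop3 hab hbc hcd hac had hbd ha1 hbW hcW hdW)
      · exact h41 (mkHop4 hab hbc hcd hde hac had hae hbd hbe hce ha1 hbW hcW hdW he1)
    · by_cases hbW : b ∈ W₁ <;> by_cases hcW : c ∈ W₁ <;> by_cases hdW : d ∈ W₁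
      · exact h42 (mkCyc4 hab hbc hcd hda hac hbd ha2
          (fun h => hb ⟨hbW, h⟩) (fun h => hc ⟨hcW, h⟩) (fun h => hd ⟨hdW, h⟩))
      · exact h21 (mkHop2 hcd hda hac.symm hcW hdW ha1)
      · exact h21 (mkHop2 hbc hcd hbd hbW hcW hdW)
      · exact h31 (mkHop3 hbc hcd hda hbd (G.ne_of_adj hab).symm hac.symm hbW hcW hdW ha1)
      · exact h21 (mkHop2 hab hbc hac ha1 hbW hcW)
      · exact h21 (mkHop2 hab hbc hac ha1 hbW hcW)
      · exact h31 (mkHop3 hab hbc hcd hac (G.ne_of_adj hda).symm hbd ha1 hbW hcW hdW)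
      · exact h41 (mkCyc4 hab hbc hcd hda hac hbd ha1 hbW hcW hdW)
  · rintro ⟨v₁, v₂, v₃, v₄, hnd, ⟨h11, h12⟩, hv2, hv3, hv4, e12, e23, e34, e42⟩
    have h14 : v₁ ≠ v₄ := by simp at hnd; tauto
    have h13 : v₁ ≠ v₃ := by simp at hnd; tauto
    have h24 : v₂ ≠ v₄ := by simp at hnd; tauto
    by_cases h2W : v₂ ∈ W₁ <;> by_cases h3W : v₃ ∈ W₁ <;> by_cases h4W : v₄ ∈ W₁
    · exact hl2 ⟨v₁, v₂, v₃, v₄, hnd, h12, (fun h => hv2 ⟨h2W, h⟩),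
        (fun h => hv3 ⟨h3W, h⟩), (fun h => hv4 ⟨h4W, h⟩), e12, e23, e34, e42⟩
    · exact h21 (mkHop2 e34 e42 (G.ne_of_adj e23).symm h3W h4W h2W)
    · exact h21 (mkHop2 e23 e34 h24 h2W h3W h4W)
    · exact h31 (mkCyc3 e23 e34 e42 h2W h3W h4W)
    · exact h21 (mkHop2 e12 e23 h13 h11 h2W h3W)
    · exact h21 (mkHop2 e12 e23 h13 h11 h2W h3W)
    · exact h21 (mkHop2 e42 e12.symm h14.symm h4W h2W h11)
    · exact hl1 ⟨v₁, v₂, v₃, v₄, hnd, h11, h2W, h3W, h4W, e12, e23, e34, e42⟩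

lemma closed_univ : ClosedRT G (Set.univ : Set V) := by
  refine ⟨(subset_antisymm subset_desc fun _ _ => trivial), ?_, ?_, ?_, ?_⟩
  · rintro (⟨f, _, _, _, _, hnot⟩ | ⟨hτ, _⟩)
    · exact hnot 1 (by decide) (by decide) trivial
    · omega
  · rintro (⟨f, _, _, _, _, hnot⟩ | ⟨_, f, _, _, _, _, hnot⟩) <;>
      exact hnot 1 (by decide) (by decide) trivial
  · rintro (⟨f, _, _, _, _, hnot⟩ | ⟨_, f, _, _, _, _, hnot⟩) <;>
      exact hnot 1 (by decide) (by decide) trivial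
  · rintro ⟨v₁, v₂, v₃, v₄, _, _, hv2, _⟩
    exact hv2 trivial

end helpers

/-- in a finite simple graph with a linear order on the vertices, every
vertex set has exactly one closure. -/
theorem stmt_13 {V : Type*} [Fintype V] [LinearOrder V] (G : SimpleGraph V)
    (U : Set V) : ∃! W : Set V, IsClosureRT G U W := by

  set S : Set (Set V) := {W | ClosedRT G W ∧ U ⊆ W} with hS
  have hfin : S.Finite := Set.toFinite S
  have hne : S.Nonempty := ⟨Set.univ, closed_univ, fun _ _ => trivial⟩
  obtain ⟨W, hWS, hmin0⟩ := Set.Finite.exists_minimalFor id S hfin hne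
  have hmin : ∀ a' ∈ S, a' ≤ W → W = a' := fun a' ha' h => le_antisymm (hmin0 ha' h) h
  refine ⟨W, ⟨hWS.1, hWS.2, fun W' hc hsub hss => (hmin W' ⟨hc, hsub⟩ hss).symm⟩, ?_⟩
  rintro W' ⟨hc', hsub', hmin'⟩
  have hint : ClosedRT G (W' ∩ W) := closed_inter hc' hWS.1
  have h1 : W' ∩ W = W' := hmin' _ hint (fun v hv => ⟨hsub' hv, hWS.2 hv⟩)
    Set.inter_subset_left
  have h2 : W = W' ∩ W := hmin (W' ∩ W) ⟨hint, fun v hv => ⟨hsub' hv, hWS.2 hv⟩⟩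
    Set.inter_subset_right
  rw [← h1, ← h2]
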